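/- Let α be a positive integer, 0 < p = 1 - q < 1, z ∈ ℝ, and define g_z : {0,1,…,α} → ℝ by g_z(0) = 0 and, for 1 ≤ k ≤ α, g_z(k) = -∑_{j=k}^{α} [(α-k)!/(α-j)!] · [(k-1)!/j!] · (p/q)^{j-k} · [(j-z)^+ - E(B_{α,p}-z)^+]. Then g_z solves the Stein equation: for every k = 0,1,…,α, ((α-k)p/q) g_z(k+1) - k g_z(k) = (k-z)^+ - E(B_{α,p}-z)^+ (where g_z(α+1) may be taken to be 0, since the coefficient (α-k)p/q vanishes at k = α). -/

import Mathlib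

open Finset

/-- `E[(B_{α,p} - z)^+]`, the expected call function of a binomial random variable
`B_{α,p}` with `P(B = j) = C(α,j) p^j (1-p)^{α-j}` for `j = 0,…,α`. -/
noncomputable def binomCallExp (α : ℕ) (p z : ℝ) : ℝ :=
  ∑ j ∈ Finset.range (α + 1),
    (α.choose j : ℝ) * p ^ j * (1 - p) ^ (α - j) * max ((j : ℝ) - z) 0

/-- `h₁(k) = ∑_{j=k}^{α} [(α-k)!/(α-j)!]·[(k-1)!/j!]·(p/q)^{j-k}·(j-z)^+` with `q = 1 - p`. -/
noncomputable def h1 (α : ℕ) (p z : ℝ) (k : ℕ) : ℝ :=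
  ∑ j ∈ Finset.Icc k α,
    ((α - k).factorial : ℝ) / ((α - j).factorial : ℝ) *
      (((k - 1).factorial : ℝ) / (j.factorial : ℝ)) *
        (p / (1 - p)) ^ (j - k) * max ((j : ℝ) - z) 0

/-- `h₂(k) = ∑_{j=k}^{α} [(α-k)!/(α-j)!]·[(k-1)!/j!]·(p/q)^{j-k}·E[(B_{α,p}-z)^+]`
with `q = 1 - p`. -/
noncomputable def h2 (α : ℕ) (p z : ℝ) (k : ℕ) : ℝ :=
  ∑ j ∈ Finset.Icc k α,
    ((α - k).factorial : ℝ) / ((α - j).factorial : ℝ) *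
      (((k - 1).factorial : ℝ) / (j.factorial : ℝ)) *
        (p / (1 - p)) ^ (j - k) * binomCallExp α p z

/-- The solution `g_z` of the binomial Stein equation: `g_z(0) = 0`,
`g_z(k) = -∑_{j=k}^{α} [(α-k)!/(α-j)!]·[(k-1)!/j!]·(p/q)^{j-k}·[(j-z)^+ - E(B_{α,p}-z)^+]`
for `1 ≤ k ≤ α`, extended by `g_z(k) = 0` for `k > α` (in particular `g_z(α+1) = 0`). -/
noncomputable def steinSol (α : ℕ) (p z : ℝ) (k : ℕ) : ℝ :=
  if k = 0 ∨ α < k then 0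
  else
    -∑ j ∈ Finset.Icc k α,
      ((α - k).factorial : ℝ) / ((α - j).factorial : ℝ) *
        (((k - 1).factorial : ℝ) / (j.factorial : ℝ)) *
          (p / (1 - p)) ^ (j - k) * (max ((j : ℝ) - z) 0 - binomCallExp α p z)

/-- The function `g_z` defined by `g_z(0) = 0` and
`g_z(k) = -∑_{j=k}^{α} [(α-k)!/(α-j)!]·[(k-1)!/j!]·(p/q)^{j-k}·[(j-z)^+ - E(B_{α,p}-z)^+]`
for `1 ≤ k ≤ α` (with `g_z(α+1) = 0`) solves the binomial Stein equation:
for every `k = 0,1,…,α`,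
`((α-k)p/q) g_z(k+1) - k g_z(k) = (k-z)^+ - E(B_{α,p}-z)^+`. -/

lemma cast_factorial_pred (n : ℕ) (hn : 1 ≤ n) :
    (n.factorial : ℝ) = (n : ℝ) * ((n - 1).factorial : ℝ) := by
  obtain ⟨m, rfl⟩ : ∃ m, n = m + 1 := ⟨n - 1, by omega⟩
  simp [Nat.factorial_succ]

lemma sum_pmf_one (α : ℕ) (p : ℝ) :
    ∑ j ∈ Finset.range (α + 1), (α.choose j : ℝ) * p ^ j * (1 - p) ^ (α - j) = 1 := by
  calc ∑ j ∈ Finset.range (α + 1), (α.choose j : ℝ) * p ^ j * (1 - p) ^ (α - j)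
      = ∑ j ∈ Finset.range (α + 1), p ^ j * (1 - p) ^ (α - j) * (α.choose j : ℝ) := by
        exact Finset.sum_congr rfl (fun j _ => by ring)
    _ = (p + (1 - p)) ^ α := (add_pow p (1 - p) α).symm
    _ = 1 := by norm_num

lemma sum_c_zero (α : ℕ) (p z : ℝ) (hp : 0 < p) (hp1 : p < 1) :
    ∑ j ∈ Finset.range (α + 1),
      (α.choose j : ℝ) * (p / (1 - p)) ^ j *
        (max ((j : ℝ) - z) 0 - binomCallExp α p z) = 0 := by
  have hq0 : (0 : ℝ) < 1 - p := by linarith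
  have hqa : ((1 - p) ^ α : ℝ) ≠ 0 := pow_ne_zero _ (ne_of_gt hq0)
  have hB : ∑ j ∈ Finset.range (α + 1),
      (α.choose j : ℝ) * p ^ j * (1 - p) ^ (α - j) *
        (max ((j : ℝ) - z) 0 - binomCallExp α p z) = 0 := by
    simp only [mul_sub]
    rw [Finset.sum_sub_distrib, ← Finset.sum_mul, sum_pmf_one, one_mul,
      binomCallExp, sub_self]
  have hterm : ∀ j ∈ Finset.range (α + 1),
      (α.choose j : ℝ) * p ^ j * (1 - p) ^ (α - j) *
        (max ((j : ℝ) - z) 0 - binomCallExp α p z)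
      = (1 - p) ^ α * ((α.choose j : ℝ) * (p / (1 - p)) ^ j *
        (max ((j : ℝ) - z) 0 - binomCallExp α p z)) := by
    intro j hj
    have hj' : j ≤ α := by simpa [Nat.lt_succ_iff] using hj
    have hpow : (1 - p) ^ α = (1 - p) ^ (α - j) * (1 - p) ^ j := by
      rw [← pow_add, Nat.sub_add_cancel hj']
    rw [hpow, div_pow]
    field_simp
  rw [Finset.sum_congr rfl hterm, ← Finset.mul_sum] at hB
  exact (mul_eq_zero.mp hB).resolve_left hqa

lemma steinSol_pos (α : ℕ) (p z : ℝ) (m : ℕ) (hm : 1 ≤ m) :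
    steinSol α p z m =
      -∑ j ∈ Finset.Icc m α,
        ((α - m).factorial : ℝ) / ((α - j).factorial : ℝ) *
          (((m - 1).factorial : ℝ) / (j.factorial : ℝ)) *
            (p / (1 - p)) ^ (j - m) * (max ((j : ℝ) - z) 0 - binomCallExp α p z) := by
  rcases le_or_gt m α with h | h
  · rw [steinSol, if_neg]
    push_neg
    exact ⟨by omega, by omega⟩
  · rw [steinSol, if_pos (Or.inr h), Finset.Icc_eq_empty (by omega), Finset.sum_empty,
      neg_zero]

theorem steinSol_solves_stein_equation (α : ℕ) (hα : 0 < α) (p q : ℝ)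
    (hq : q = 1 - p) (hp : 0 < p) (hp1 : p < 1) (z : ℝ) :
    ∀ k ≤ α,
      (((α : ℝ) - k) * p / q) * steinSol α p z (k + 1) - (k : ℝ) * steinSol α p z k
        = max ((k : ℝ) - z) 0 - binomCallExp α p z := by
  subst hq
  have hq0 : (0 : ℝ) < 1 - p := by linarith
  have hqne : (1 - p : ℝ) ≠ 0 := ne_of_gt hq0
  intro k hk
  rcases Nat.eq_zero_or_pos k with rfl | hk1
  · -- k = 0
    have hs1 := steinSol_pos α p z 1 le_rfl
    have h0 : steinSol α p z 0 = 0 := by rw [steinSol, if_pos (Or.inl rfl)]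
    rw [zero_add, h0, mul_zero, sub_zero, hs1]
    have hzero := sum_c_zero α p z hp hp1
    have hsplit : Finset.range (α + 1) = insert 0 (Finset.Icc 1 α) := by
      ext x; simp [Finset.mem_Icc, Nat.lt_succ_iff]; omega
    rw [hsplit, Finset.sum_insert (by simp)] at hzero
    simp only [pow_zero, Nat.choose_zero_right, Nat.cast_one, one_mul, mul_one] at hzero
    -- hzero : c 0 + ∑_{Icc 1 α} C(α,j) r^j c_j = 0
    have hterm : ∀ j ∈ Finset.Icc 1 α,
        ((α : ℝ) - 0) * p / (1 - p) *
          (((α - 1).factorial : ℝ) / ((α - j).factorial : ℝ) *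
            (((1 - 1).factorial : ℝ) / (j.factorial : ℝ)) *
              (p / (1 - p)) ^ (j - 1) * (max ((j : ℝ) - z) 0 - binomCallExp α p z))
        = (α.choose j : ℝ) * (p / (1 - p)) ^ j *
            (max ((j : ℝ) - z) 0 - binomCallExp α p z) := by
      intro j hj
      rw [Finset.mem_Icc] at hj
      have hch : (α.choose j : ℝ) = (α.factorial : ℝ) / ((j.factorial : ℝ) * ((α - j).factorial : ℝ)) := by
        rw [Nat.cast_choose ℝ hj.2]
      have hfa : (α.factorial : ℝ) = (α : ℝ) * ((α - 1).factorial : ℝ) :=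
        cast_factorial_pred α hα
      have hpow : (p / (1 - p)) ^ j = (p / (1 - p)) ^ (j - 1) * (p / (1 - p)) := by
        have : j = (j - 1) + 1 := by omega
        rw [this, pow_succ]
        congr 1 <;> omega
      rw [hch, hfa, hpow]
      have h0 : ((1 - 1 : ℕ).factorial : ℝ) = 1 := by norm_num [Nat.factorial]
      rw [h0]
      have hfj : (j.factorial : ℝ) ≠ 0 := Nat.cast_ne_zero.mpr j.factorial_ne_zero
      have hfaj : ((α - j).factorial : ℝ) ≠ 0 := Nat.cast_ne_zero.mpr (α - j).factorial_ne_zero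
      field_simp
      ring
    simp only [Nat.cast_zero] at hzero ⊢
    rw [mul_neg, Finset.mul_sum, Finset.sum_congr rfl hterm]
    linarith [hzero]
  · -- 1 ≤ k ≤ α
    have hsk := steinSol_pos α p z k hk1
    have hsk1 := steinSol_pos α p z (k + 1) (by omega)
    rw [hsk, hsk1]
    have hsplit : Finset.Icc k α = insert k (Finset.Icc (k + 1) α) := by
      ext x; simp [Finset.mem_Icc]; omega
    have hnot : k ∉ Finset.Icc (k + 1) α := by simp
    rw [hsplit, Finset.sum_insert hnot]
    have hAkk : (k : ℝ) * (((α - k).factorial : ℝ) / ((α - k).factorial : ℝ) *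
        (((k - 1).factorial : ℝ) / (k.factorial : ℝ)) * (p / (1 - p)) ^ (k - k)) = 1 := by
      have hfk : (k.factorial : ℝ) = (k : ℝ) * ((k - 1).factorial : ℝ) :=
        cast_factorial_pred k hk1
      have hf1 : ((α - k).factorial : ℝ) ≠ 0 := Nat.cast_ne_zero.mpr (α - k).factorial_ne_zero
      have hf2 : ((k - 1).factorial : ℝ) ≠ 0 := Nat.cast_ne_zero.mpr (k - 1).factorial_ne_zero
      have hk0 : (k : ℝ) ≠ 0 := Nat.cast_ne_zero.mpr (by omega)
      rw [Nat.sub_self, pow_zero, hfk]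
      field_simp
    have hterm : ∀ j ∈ Finset.Icc (k + 1) α,
        ((α : ℝ) - k) * p / (1 - p) *
          (((α - (k + 1)).factorial : ℝ) / ((α - j).factorial : ℝ) *
            (((k + 1 - 1).factorial : ℝ) / (j.factorial : ℝ)) *
              (p / (1 - p)) ^ (j - (k + 1)) * (max ((j : ℝ) - z) 0 - binomCallExp α p z))
        = (k : ℝ) *
          (((α - k).factorial : ℝ) / ((α - j).factorial : ℝ) *
            (((k - 1).factorial : ℝ) / (j.factorial : ℝ)) *
              (p / (1 - p)) ^ (j - k) * (max ((j : ℝ) - z) 0 - binomCallExp α p z)) := by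
      intro j hj
      rw [Finset.mem_Icc] at hj
      have hklt : k < α := by omega
      have hcast : ((α : ℝ) - k) = ((α - k : ℕ) : ℝ) := by
        rw [Nat.cast_sub (by omega)]
      have hfak : ((α - k).factorial : ℝ) = ((α - k : ℕ) : ℝ) * ((α - (k + 1)).factorial : ℝ) := by
        have h1 : α - (k + 1) = (α - k) - 1 := by omega
        rw [h1]
        exact cast_factorial_pred _ (by omega)
      have hfk : ((k + 1 - 1).factorial : ℝ) = (k : ℝ) * ((k - 1).factorial : ℝ) := by
        have h1 : k + 1 - 1 = k := by omega
        rw [h1]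
        exact cast_factorial_pred k hk1
      have hpow : (p / (1 - p)) ^ (j - k) = (p / (1 - p)) ^ (j - (k + 1)) * (p / (1 - p)) := by
        have h1 : j - k = (j - (k + 1)) + 1 := by omega
        rw [h1, pow_succ]
      rw [hcast, hfak, hfk, hpow]
      ring
    have key : ((α : ℝ) - k) * p / (1 - p) *
        (∑ j ∈ Finset.Icc (k + 1) α,
          ((α - (k + 1)).factorial : ℝ) / ((α - j).factorial : ℝ) *
            (((k + 1 - 1).factorial : ℝ) / (j.factorial : ℝ)) *
              (p / (1 - p)) ^ (j - (k + 1)) * (max ((j : ℝ) - z) 0 - binomCallExp α p z))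
        = (k : ℝ) *
        (∑ j ∈ Finset.Icc (k + 1) α,
          ((α - k).factorial : ℝ) / ((α - j).factorial : ℝ) *
            (((k - 1).factorial : ℝ) / (j.factorial : ℝ)) *
              (p / (1 - p)) ^ (j - k) * (max ((j : ℝ) - z) 0 - binomCallExp α p z)) := by
      rw [Finset.mul_sum, Finset.mul_sum]
      exact Finset.sum_congr rfl hterm
    have hck : (k : ℝ) * (((α - k).factorial : ℝ) / ((α - k).factorial : ℝ) *
        (((k - 1).factorial : ℝ) / (k.factorial : ℝ)) * (p / (1 - p)) ^ (k - k) *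
          (max ((k : ℝ) - z) 0 - binomCallExp α p z))
        = max ((k : ℝ) - z) 0 - binomCallExp α p z := by
      rw [← mul_assoc, ← mul_assoc, ← mul_assoc]
      calc _ = (k : ℝ) * (((α - k).factorial : ℝ) / ((α - k).factorial : ℝ) *
          (((k - 1).factorial : ℝ) / (k.factorial : ℝ)) * (p / (1 - p)) ^ (k - k)) *
            (max ((k : ℝ) - z) 0 - binomCallExp α p z) := by ring
        _ = _ := by rw [hAkk, one_mul]
    linear_combination hck - key
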